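/- In ℝ³, the intersection over all triples (α, β, γ) of strictly positive real numbers of the cones pos({(1,1,1), (β, β, −α−γ), (α, −β−γ, α)}) equals pos({(1,1,1), (1,0,1), (1,1,0), (1,0,0)}), and this cone equals {(x, y, z) ∈ ℝ³ : y ≥ 0, z ≥ 0, x ≥ y, x ≥ z}. -/

import Mathlib

/-- The positive hull of a subset `S` of a real vector space: all finite nonnegative
linear combinations of elements of `S`. -/
def posHull {E : Type*} [AddCommGroup E] [Module ℝ E] (S : Set E) : Set E :=
  {x | ∃ (t : Finset E) (c : E → ℝ),
    ↑t ⊆ S ∧ (∀ y ∈ t, 0 ≤ c y) ∧ x = ∑ y ∈ t, c y • y}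

lemma posHull_ineq {S : Set (Fin 3 → ℝ)} (p q r : ℝ)
    (h : ∀ y ∈ S, 0 ≤ p * y 0 + q * y 1 + r * y 2) :
    ∀ x ∈ posHull S, 0 ≤ p * x 0 + q * x 1 + r * x 2 := by
  rintro x ⟨t, c, hts, hc, rfl⟩
  have hap : ∀ i, (∑ y ∈ t, c y • y) i = ∑ y ∈ t, c y * y i := by
    intro i; rw [Finset.sum_apply]; rfl
  rw [hap 0, hap 1, hap 2, Finset.mul_sum, Finset.mul_sum, Finset.mul_sum,
    ← Finset.sum_add_distrib, ← Finset.sum_add_distrib]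
  refine Finset.sum_nonneg fun y hy => ?_
  have h1 := h y (hts hy)
  have h2 := hc y hy
  nlinarith

lemma mem3 {u1 u2 u3 : Fin 3 → ℝ} (h12 : u1 ≠ u2) (h13 : u1 ≠ u3) (h23 : u2 ≠ u3)
    {a b c : ℝ} (ha : 0 ≤ a) (hb : 0 ≤ b) (hc : 0 ≤ c) :
    a • u1 + b • u2 + c • u3 ∈ posHull {u1, u2, u3} := by
  classical
  refine ⟨{u1, u2, u3}, fun y => if y = u1 then a else if y = u2 then b else c, ?_, ?_, ?_⟩
  · intro y hy; simpa using hy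
  · intro y _; dsimp only; split_ifs <;> assumption
  · rw [Finset.sum_insert (by simp [h12, h13]), Finset.sum_insert (by simp [h23]),
      Finset.sum_singleton]
    simp [h12, Ne.symm h12, h13, Ne.symm h13, h23, Ne.symm h23, add_assoc]

lemma mem4 {u1 u2 u3 u4 : Fin 3 → ℝ} (h12 : u1 ≠ u2) (h13 : u1 ≠ u3) (h14 : u1 ≠ u4)
    (h23 : u2 ≠ u3) (h24 : u2 ≠ u4) (h34 : u3 ≠ u4)
    {a b c d : ℝ} (ha : 0 ≤ a) (hb : 0 ≤ b) (hc : 0 ≤ c) (hd : 0 ≤ d) :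
    a • u1 + b • u2 + c • u3 + d • u4 ∈ posHull {u1, u2, u3, u4} := by
  classical
  refine ⟨{u1, u2, u3, u4},
    fun y => if y = u1 then a else if y = u2 then b else if y = u3 then c else d, ?_, ?_, ?_⟩
  · intro y hy; simpa using hy
  · intro y _; dsimp only; split_ifs <;> assumption
  · rw [Finset.sum_insert (by simp [h12, h13, h14]), Finset.sum_insert (by simp [h23, h24]),
      Finset.sum_insert (by simp [h34]), Finset.sum_singleton]
    simp [Ne.symm h12, Ne.symm h13, Ne.symm h14, Ne.symm h23, Ne.symm h24, Ne.symm h34, add_assoc]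

lemma second_eq :
    posHull {![(1 : ℝ), 1, 1], ![1, 0, 1], ![1, 1, 0], ![1, 0, 0]}
    = {x : Fin 3 → ℝ | 0 ≤ x 1 ∧ 0 ≤ x 2 ∧ x 1 ≤ x 0 ∧ x 2 ≤ x 0} := by
  apply Set.Subset.antisymm
  · intro x hx
    have h1 := posHull_ineq 0 1 0 (by rintro y (rfl | rfl | rfl | rfl) <;> norm_num) x hx
    have h2 := posHull_ineq 0 0 1 (by rintro y (rfl | rfl | rfl | rfl) <;> norm_num [Matrix.cons_val_two]) x hx
    have h3 := posHull_ineq 1 (-1) 0 (by rintro y (rfl | rfl | rfl | rfl) <;> norm_num) x hx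
    have h4 := posHull_ineq 1 0 (-1) (by rintro y (rfl | rfl | rfl | rfl) <;> norm_num [Matrix.cons_val_two]) x hx
    refine ⟨by linarith, by linarith, by linarith, by linarith⟩
  · rintro x ⟨h1, h2, h3, h4⟩
    have hd : (![(1:ℝ),1,1] : Fin 3 → ℝ) ≠ ![1,0,1] := by
      intro h; have := congrFun h 1; norm_num at this
    have hd2 : (![(1:ℝ),1,1] : Fin 3 → ℝ) ≠ ![1,1,0] := by
      intro h; have := congrFun h 2; norm_num [Matrix.cons_val_two] at this
    have hd3 : (![(1:ℝ),1,1] : Fin 3 → ℝ) ≠ ![1,0,0] := by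
      intro h; have := congrFun h 1; norm_num at this
    have hd4 : (![(1:ℝ),0,1] : Fin 3 → ℝ) ≠ ![1,1,0] := by
      intro h; have := congrFun h 1; norm_num at this
    have hd5 : (![(1:ℝ),0,1] : Fin 3 → ℝ) ≠ ![1,0,0] := by
      intro h; have := congrFun h 2; norm_num [Matrix.cons_val_two] at this
    have hd6 : (![(1:ℝ),1,0] : Fin 3 → ℝ) ≠ ![1,0,0] := by
      intro h; have := congrFun h 1; norm_num at this
    rcases le_total (x 1) (x 2) with h | h
    · have hx : x = (x 1) • ![(1:ℝ),1,1] + (x 2 - x 1) • ![1,0,1] + (0:ℝ) • ![1,1,0]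
          + (x 0 - x 2) • ![1,0,0] := by
        funext i; fin_cases i <;> simp
      rw [hx]
      exact mem4 hd hd2 hd3 hd4 hd5 hd6 h1 (by linarith) le_rfl (by linarith)
    · have hx : x = (x 2) • ![(1:ℝ),1,1] + (0:ℝ) • ![1,0,1] + (x 1 - x 2) • ![1,1,0]
          + (x 0 - x 1) • ![1,0,0] := by
        funext i; fin_cases i <;> simp
      rw [hx]
      exact mem4 hd hd2 hd3 hd4 hd5 hd6 h2 le_rfl (by linarith) (by linarith)

/-- The computation of `𝓕_Δ = ⋂_w 𝓕_{Δ,w}` in Example 4.4: in ℝ³, the intersection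
over all `α, β, γ > 0` of the cones `pos({(1,1,1), (β,β,−α−γ), (α,−β−γ,α)})` equals
`pos({(1,1,1), (1,0,1), (1,1,0), (1,0,0)})`, which is
`{(x,y,z) : y ≥ 0, z ≥ 0, x ≥ y, x ≥ z}`. -/
theorem F_Delta_blowup_P4 :
    (⋂ (α : ℝ) (β : ℝ) (γ : ℝ) (_ : 0 < α) (_ : 0 < β) (_ : 0 < γ),
      posHull {![(1 : ℝ), 1, 1], ![β, β, -α - γ], ![α, -β - γ, α]})
    = posHull {![(1 : ℝ), 1, 1], ![1, 0, 1], ![1, 1, 0], ![1, 0, 0]} ∧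
    posHull {![(1 : ℝ), 1, 1], ![1, 0, 1], ![1, 1, 0], ![1, 0, 0]}
    = {x : Fin 3 → ℝ | 0 ≤ x 1 ∧ 0 ≤ x 2 ∧ x 1 ≤ x 0 ∧ x 2 ≤ x 0} := by
  refine ⟨?_, second_eq⟩
  rw [second_eq]
  apply Set.Subset.antisymm
  · intro x hx
    simp only [Set.mem_iInter] at hx
    -- from weight (1,1,1): x 1 ≤ x 0 and x 2 ≤ x 0
    have hw1 := hx 1 1 1 one_pos one_pos one_pos
    have h3 := posHull_ineq 1 (-1) 0
      (by rintro y (rfl | rfl | rfl) <;> norm_num) x hw1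
    have h4 := posHull_ineq 1 0 (-1)
      (by rintro y (rfl | rfl | rfl) <;> norm_num [Matrix.cons_val_two]) x hw1
    have hx1 : 0 ≤ x 1 := by
      by_contra hneg
      push_neg at hneg
      obtain ⟨α, hα0, hbad⟩ : ∃ α : ℝ, 0 < α ∧ x 0 + α * x 1 + x 2 < 0 := by
        refine ⟨(|x 0| + |x 2| + 1) / (-x 1), div_pos (by positivity) (by linarith), ?_⟩
        have hne : x 1 ≠ 0 := ne_of_lt hneg
        have hmul : (|x 0| + |x 2| + 1) / (-x 1) * x 1 = -(|x 0| + |x 2| + 1) := by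
          rw [div_mul_eq_mul_div, div_eq_iff (show -x 1 ≠ 0 by linarith)]; ring
        linarith [le_abs_self (x 0), le_abs_self (x 2), hmul]
      have hw := hx α 1 1 hα0 one_pos one_pos
      have hL := posHull_ineq 1 α 1 (by
        rintro y (rfl | rfl | rfl) <;> simp <;> nlinarith) x hw
      linarith
    have hx2 : 0 ≤ x 2 := by
      by_contra hneg
      push_neg at hneg
      obtain ⟨β, hβ0, hbad⟩ : ∃ β : ℝ, 0 < β ∧ x 0 + x 1 + β * x 2 < 0 := by
        refine ⟨(|x 0| + |x 1| + 1) / (-x 2), div_pos (by positivity) (by linarith), ?_⟩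
        have hne : x 2 ≠ 0 := ne_of_lt hneg
        have hmul : (|x 0| + |x 1| + 1) / (-x 2) * x 2 = -(|x 0| + |x 1| + 1) := by
          rw [div_mul_eq_mul_div, div_eq_iff (show -x 2 ≠ 0 by linarith)]; ring
        linarith [le_abs_self (x 0), le_abs_self (x 1), hmul]
      have hw := hx 1 β 1 one_pos hβ0 one_pos
      have hL := posHull_ineq 1 1 β (by
        rintro y (rfl | rfl | rfl) <;> simp <;> nlinarith) x hw
      linarith
    exact ⟨hx1, hx2, by linarith, by linarith⟩
  · rintro x ⟨h1, h2, h3, h4⟩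
    simp only [Set.mem_iInter]
    intro α β γ hα hβ hγ
    have hs : (0:ℝ) < α + β + γ := by linarith
    have hd1 : (![(1:ℝ),1,1] : Fin 3 → ℝ) ≠ ![β, β, -α - γ] := by
      intro h; have := congrFun h 2; simp at this; linarith
    have hd2 : (![(1:ℝ),1,1] : Fin 3 → ℝ) ≠ ![α, -β - γ, α] := by
      intro h; have := congrFun h 1; simp at this; linarith
    have hd3 : (![β, β, -α - γ] : Fin 3 → ℝ) ≠ ![α, -β - γ, α] := by
      intro h; have := congrFun h 1; simp at this; linarith
    have hx : x = ((γ * x 0 + β * x 2 + α * x 1) / (α + β + γ)) • ![(1:ℝ),1,1]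
        + ((x 0 - x 2) / (α + β + γ)) • ![β, β, -α - γ]
        + ((x 0 - x 1) / (α + β + γ)) • ![α, -β - γ, α] := by
      funext i; fin_cases i <;> · simp; field_simp; ring
    rw [hx]
    refine mem3 hd1 hd2 hd3 ?_ ?_ ?_
    · apply div_nonneg _ hs.le
      have : 0 ≤ x 0 := by linarith
      positivity
    · apply div_nonneg (by linarith) hs.le
    · apply div_nonneg (by linarith) hs.le
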